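/- For every odd integer k ≥ 19 and every prime D ≥ 7, one has Ψ_k^1(D) < 0.67 and Ψ_k^2(D) < 0.1. -/

import Mathlib

/-- The J-Bessel function `J_ν(x)`, defined for real `ν ≥ 0` and `x > 0` by
`J_ν(x) = (2(x/2)^ν / (Γ(ν+1/2)Γ(1/2))) ∫_0^{π/2} sin(θ)^{2ν} cos(x cos θ) dθ`. -/
noncomputable def besselJ (ν x : ℝ) : ℝ :=
  2 * (x / 2) ^ ν / (Real.Gamma (ν + 1 / 2) * Real.Gamma (1 / 2)) *
    ∫ θ in (0 : ℝ)..(Real.pi / 2), Real.sin θ ^ (2 * ν) * Real.cos (x * Real.cos θ)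

/-- The Kloosterman sum `S(m, n; c) = Σ_{x ∈ (ℤ/cℤ)ˣ} e((mx + n x̄)/c)`. -/
noncomputable def klSum (m n : ℤ) (c : ℕ) : ℂ :=
  ∑ x ∈ Finset.filter (fun x => Nat.Coprime x c) (Finset.range c),
    Complex.exp (2 * Real.pi * Complex.I *
      ((m : ℂ) * (x : ℂ) + (n : ℂ) * ((((x : ZMod c)⁻¹ : ZMod c).val : ℕ) : ℂ)) / (c : ℂ))

/-- The twisted Kloosterman sum `S_χ(m, n; c) = Σ_{x ∈ (ℤ/cℤ)ˣ} χ(x mod D) e((mx + n x̄)/c)`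
for a Dirichlet character `χ` mod `D`. -/
noncomputable def klSumT {D : ℕ} (χ : DirichletCharacter ℂ D) (m n : ℤ) (c : ℕ) : ℂ :=
  ∑ x ∈ Finset.filter (fun x => Nat.Coprime x c) (Finset.range c),
    χ ((x : ℕ) : ZMod D) * Complex.exp (2 * Real.pi * Complex.I *
      ((m : ℂ) * (x : ℂ) + (n : ℂ) * ((((x : ZMod c)⁻¹ : ZMod c).val : ℕ) : ℂ)) / (c : ℂ))

/-- The quadratic Dirichlet character mod a prime `D` (the Legendre symbol `(·/D)`),
with values in `ℂ`. -/
noncomputable def omegaChar (D : ℕ) (hD : D.Prime) : DirichletCharacter ℂ D :=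
  letI : Fact D.Prime := ⟨hD⟩
  (quadraticChar (ZMod D)).ringHomComp (Int.castRingHom ℂ)

/-- `φ_k(m,n) = δ_{m,n} + 2π i^k Σ_{c > 0, D ∣ c} c⁻¹ S_ω(m,n;c) J_{k-1}(4π√(mn)/c)`. -/
noncomputable def phiK (D : ℕ) (χ : DirichletCharacter ℂ D) (k m n : ℕ) : ℂ :=
  (if m = n then 1 else 0) +
    2 * Real.pi * Complex.I ^ k *
      ∑' c : {c : ℕ // 0 < c ∧ D ∣ c},
        ((c : ℕ) : ℂ)⁻¹ * klSumT χ m n c *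
          ((besselJ ((k : ℝ) - 1) (4 * Real.pi * Real.sqrt ((m : ℝ) * n) / ((c : ℕ) : ℝ)) : ℝ) : ℂ)

/-- `Ψ_k^1(D) = 2π D^{-1/2} Σ_{ℓ ≥ 1, D ∤ ℓ} ℓ^{-1/2} σ₀(ℓ) |J_{k-1}(4π/ℓ)|`. -/
noncomputable def Psi1 (k D : ℕ) : ℝ :=
  2 * Real.pi * (D : ℝ) ^ (-(1 / 2) : ℝ) *
    ∑' ℓ : {ℓ : ℕ // 0 < ℓ ∧ ¬ D ∣ ℓ},
      ((ℓ : ℕ) : ℝ) ^ (-(1 / 2) : ℝ) * ((ℓ : ℕ).divisors.card : ℝ) *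
        |besselJ ((k : ℝ) - 1) (4 * Real.pi / ((ℓ : ℕ) : ℝ))|

/-- `Ψ_k^2(D) = 2π Σ_{m ≥ 1} (Dm)^{-1/2} (√D σ₀(Dm) + σ₀(D²m)) |J_{k-1}(4π/(Dm))|`. -/
noncomputable def Psi2 (k D : ℕ) : ℝ :=
  2 * Real.pi *
    ∑' m : ℕ+,
      ((D : ℝ) * (m : ℕ)) ^ (-(1 / 2) : ℝ) *
        (Real.sqrt D * (((D * (m : ℕ)).divisors.card : ℝ)) + ((D ^ 2 * (m : ℕ)).divisors.card : ℝ)) *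
        |besselJ ((k : ℝ) - 1) (4 * Real.pi / ((D : ℝ) * (m : ℕ)))|

/-- The Riemann zeta function at a real argument. -/
noncomputable def zetaR (s : ℝ) : ℝ := (riemannZeta (s : ℂ)).re

open Real Finset

lemma besselJ_abs_le (ν x : ℝ) (hν : 0 ≤ ν) (hx : 0 < x) :
    |besselJ ν x| ≤ (x / 2) ^ ν * Real.sqrt π / Real.Gamma (ν + 1 / 2) := by
  have hΓ : 0 < Real.Gamma (ν + 1 / 2) := Real.Gamma_pos_of_pos (by linarith)
  have hsπ : (0:ℝ) < Real.sqrt π := Real.sqrt_pos.mpr Real.pi_pos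
  have hA : (0:ℝ) ≤ (x/2)^ν := Real.rpow_nonneg (by linarith) _
  have hcnn : (0:ℝ) ≤ 2 * (x/2)^ν / (Real.Gamma (ν+1/2) * Real.sqrt π) :=
    div_nonneg (by linarith) (by positivity)
  have hI : ‖∫ θ in (0:ℝ)..(π/2), Real.sin θ ^ (2*ν) * Real.cos (x * Real.cos θ)‖
      ≤ 1 * |π/2 - 0| := by
    apply intervalIntegral.norm_integral_le_of_norm_le_const
    intro θ hθ
    rw [Set.uIoc_of_le (by positivity)] at hθ
    have h0 : 0 ≤ Real.sin θ :=
      Real.sin_nonneg_of_nonneg_of_le_pi hθ.1.le (by nlinarith [Real.pi_pos, hθ.2])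
    have h1 : Real.sin θ ^ (2*ν) ≤ 1 :=
      Real.rpow_le_one h0 (Real.sin_le_one θ) (by linarith)
    have h2 : |Real.cos (x * Real.cos θ)| ≤ 1 := Real.abs_cos_le_one _
    have h3 : (0:ℝ) ≤ Real.sin θ ^ (2*ν) := Real.rpow_nonneg h0 _
    rw [Real.norm_eq_abs, abs_mul, abs_of_nonneg h3]
    nlinarith [abs_nonneg (Real.cos (x * Real.cos θ))]
  rw [besselJ, Real.Gamma_one_half_eq, abs_mul, abs_of_nonneg hcnn]
  rw [Real.norm_eq_abs] at hI
  have hππ : Real.sqrt π * Real.sqrt π = π := Real.mul_self_sqrt Real.pi_pos.le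
  calc 2 * (x/2)^ν / (Real.Gamma (ν+1/2) * Real.sqrt π) *
        |∫ θ in (0:ℝ)..(π/2), Real.sin θ ^ (2*ν) * Real.cos (x * Real.cos θ)|
      ≤ 2 * (x/2)^ν / (Real.Gamma (ν+1/2) * Real.sqrt π) * (1 * |π/2 - 0|) := by
        apply mul_le_mul_of_nonneg_left hI hcnn
    _ = (x/2)^ν * π / (Real.Gamma (ν+1/2) * Real.sqrt π) := by
        rw [sub_zero, abs_of_nonneg (le_of_lt (by positivity : (0:ℝ) < π/2))]
        ring
    _ = (x / 2) ^ ν * Real.sqrt π / Real.Gamma (ν + 1 / 2) := by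
        rw [div_eq_div_iff (by positivity) (ne_of_gt hΓ)]
        linear_combination (-((x/2)^ν * Real.Gamma (ν+1/2))) * hππ

lemma Gamma_nat_add_half (n : ℕ) :
    Real.Gamma ((n:ℝ) + 1/2) = (∏ i ∈ Finset.range n, ((i:ℝ) + 1/2)) * Real.sqrt π := by
  induction n with
  | zero =>
    rw [show ((0:ℕ):ℝ) + 1/2 = 1/2 by norm_num, Real.Gamma_one_half_eq]
    simp
  | succ n ih =>
    have hc : ((n+1:ℕ):ℝ) + 1/2 = ((n:ℝ) + 1/2) + 1 := by push_cast; ring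
    rw [hc, Real.Gamma_add_one (by positivity), ih, Finset.prod_range_succ]
    ring

lemma F_mono (n : ℕ) (hn : 18 ≤ n) :
    (2*π)^n / Real.Gamma ((n:ℝ)+1/2) ≤ (2*π)^18 / Real.Gamma ((18:ℝ)+1/2) := by
  induction n, hn using Nat.le_induction with
  | base => norm_num
  | succ n hn ih =>
    have hΓ : 0 < Real.Gamma ((n:ℝ)+1/2) := Real.Gamma_pos_of_pos (by positivity)
    have hrec : Real.Gamma ((↑(n+1):ℝ)+1/2) = ((n:ℝ)+1/2) * Real.Gamma ((n:ℝ)+1/2) := by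
      rw [show ((↑(n+1):ℝ)+1/2) = ((n:ℝ)+1/2) + 1 by push_cast; ring,
        Real.Gamma_add_one (by positivity)]
    have h18 : (18:ℝ) ≤ (n:ℝ) := by exact_mod_cast hn
    have h2π : 2*π ≤ (n:ℝ)+1/2 := by nlinarith [Real.pi_lt_d2]
    calc (2*π)^(n+1) / Real.Gamma ((↑(n+1):ℝ)+1/2)
        = ((2*π)^n / Real.Gamma ((n:ℝ)+1/2)) * ((2*π)/((n:ℝ)+1/2)) := by
          rw [hrec, pow_succ]
          field_simp
      _ ≤ ((2*π)^n / Real.Gamma ((n:ℝ)+1/2)) * 1 := by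
          apply mul_le_mul_of_nonneg_left _ (by positivity)
          rw [div_le_one (by positivity)]
          exact h2π
      _ = (2*π)^n / Real.Gamma ((n:ℝ)+1/2) := mul_one _
      _ ≤ _ := ih

lemma B0_num : (2*π)^18 / Real.Gamma ((18:ℝ)+1/2) * Real.sqrt π ≤ 0.276 := by
  have h := _root_.Gamma_nat_add_half 18
  have hP : (∏ i ∈ Finset.range 18, ((i:ℝ)+1/2)) = 221643095476699771875/262144 := by
    simp [Finset.prod_range_succ]
    norm_num
  rw [show ((18:ℕ):ℝ) = (18:ℝ) by norm_num, hP] at h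
  have hsπ : (0:ℝ) < Real.sqrt π := Real.sqrt_pos.mpr Real.pi_pos
  rw [h]
  have hcancel : (2*π)^18 / ((221643095476699771875/262144 : ℝ) * Real.sqrt π) * Real.sqrt π
      = (2*π)^18 / (221643095476699771875/262144 : ℝ) := by
    field_simp
  rw [hcancel, div_le_iff₀ (by norm_num)]
  have hπ : π ≤ 3.141593 := le_of_lt Real.pi_lt_d6
  calc (2*π)^18 ≤ (2*3.141593)^18 := by
        apply pow_le_pow_left₀ (by positivity) (by linarith)
    _ ≤ 0.276 * (221643095476699771875/262144) := by norm_num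

lemma J_le (n : ℕ) (hn : 18 ≤ n) (ℓ : ℝ) (hℓ : 1 ≤ ℓ) :
    |besselJ (n:ℝ) (4*π/ℓ)| ≤ 0.276 * (ℓ^18)⁻¹ := by
  have hℓ0 : (0:ℝ) < ℓ := by linarith
  have h := besselJ_abs_le (n:ℝ) (4*π/ℓ) (by positivity) (by positivity)
  rw [show (4*π/ℓ/2 : ℝ) = 2*π/ℓ by ring] at h
  have h1 : (2*π/ℓ) ^ ((n:ℕ):ℝ) = (2*π)^n / ℓ^n := by
    rw [Real.rpow_natCast, div_pow]
  rw [h1] at h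
  have hΓ : 0 < Real.Gamma ((n:ℝ)+1/2) := Real.Gamma_pos_of_pos (by positivity)
  refine h.trans ?_
  have hstep : (2*π)^n/ℓ^n * Real.sqrt π / Real.Gamma ((n:ℝ)+1/2)
      = ((2*π)^n / Real.Gamma ((n:ℝ)+1/2) * Real.sqrt π) * (ℓ^n)⁻¹ := by
    field_simp
  rw [hstep]
  have hmono : (2*π)^n / Real.Gamma ((n:ℝ)+1/2) * Real.sqrt π ≤ 0.276 :=
    le_trans (mul_le_mul_of_nonneg_right (F_mono n hn) (Real.sqrt_nonneg _)) B0_num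
  have hinv : (ℓ^n)⁻¹ ≤ (ℓ^18)⁻¹ := by
    apply inv_anti₀ (by positivity)
    exact pow_le_pow_right₀ hℓ hn
  have hnn : (0:ℝ) ≤ (ℓ^n)⁻¹ := by positivity
  calc (2*π)^n / Real.Gamma ((n:ℝ)+1/2) * Real.sqrt π * (ℓ^n)⁻¹
      ≤ 0.276 * (ℓ^n)⁻¹ := mul_le_mul_of_nonneg_right hmono hnn
    _ ≤ 0.276 * (ℓ^18)⁻¹ := by
        apply mul_le_mul_of_nonneg_left hinv (by norm_num)

lemma sum_inv_pow17_le (s : Finset ℕ) : ∑ n ∈ s, (((n:ℝ))^17)⁻¹ ≤ 1 + 1/16384 := by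
  have key : ∀ N : ℕ, ∑ n ∈ Finset.range (N+2), (((n:ℝ))^17)⁻¹
      ≤ 1 + (1 - ((N:ℝ)+1)⁻¹)/16384 := by
    intro N
    induction N with
    | zero => norm_num [Finset.sum_range_succ]
    | succ N ih =>
      rw [show N+1+2 = (N+2)+1 by ring, Finset.sum_range_succ]
      have ha : (0:ℝ) < (N:ℝ)+1 := by positivity
      have hb : (0:ℝ) < (N:ℝ)+2 := by positivity
      have h2 : (2:ℝ) ≤ (N:ℝ)+2 := by
        have : (0:ℝ) ≤ (N:ℝ) := Nat.cast_nonneg N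
        linarith
      have hbp : (2:ℝ)^15 ≤ ((N:ℝ)+2)^15 := by
        apply pow_le_pow_left₀ (by norm_num) h2
      have hkey : ((((N:ℝ)+2))^17)⁻¹ ≤ (((N:ℝ)+1)⁻¹ - ((N:ℝ)+2)⁻¹)/16384 := by
        have hR : (((N:ℝ)+1)⁻¹ - ((N:ℝ)+2)⁻¹)/16384 = (16384*(((N:ℝ)+1)*((N:ℝ)+2)))⁻¹ := by
          have hne1 : ((N:ℝ)+1) ≠ 0 := ne_of_gt ha
          have hne2 : ((N:ℝ)+2) ≠ 0 := ne_of_gt hb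
          field_simp
          ring
        rw [hR]
        apply inv_anti₀ (by positivity)
        calc 16384*(((N:ℝ)+1)*((N:ℝ)+2)) ≤ 16384*(((N:ℝ)+2)*((N:ℝ)+2)) := by nlinarith
          _ ≤ ((N:ℝ)+2)^15*(((N:ℝ)+2)*((N:ℝ)+2)) := by nlinarith
          _ = ((N:ℝ)+2)^17 := by ring
      have hc2 : ((↑(N+2):ℝ)) = (N:ℝ)+2 := by push_cast; ring
      have hc1 : ((↑(N+1):ℝ)) = (N:ℝ)+1 := by push_cast; ring
      rw [hc2, hc1]
      have : ((N:ℝ)+1+1)⁻¹ = ((N:ℝ)+2)⁻¹ := by ring_nf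
      rw [this]
      linarith
  obtain ⟨N, hN⟩ := s.exists_nat_subset_range
  have h1 : ∑ n ∈ s, (((n:ℝ))^17)⁻¹ ≤ ∑ n ∈ Finset.range (N+2), (((n:ℝ))^17)⁻¹ := by
    apply Finset.sum_le_sum_of_subset_of_nonneg
      (hN.trans (Finset.range_subset_range.mpr (by omega)))
    intros
    positivity
  have h2 := key N
  have h3 : (0:ℝ) ≤ ((N:ℝ)+1)⁻¹ := by positivity
  linarith

lemma summable_inv_pow17 : Summable (fun n : ℕ => (((n:ℝ))^17)⁻¹) := by
  have := Real.summable_one_div_nat_pow (p := 17) |>.mpr (by norm_num)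
  simpa [one_div] using this

lemma tsum_inv_pow17_le : ∑' n : ℕ, (((n:ℝ))^17)⁻¹ ≤ 1 + 1/16384 :=
  Summable.tsum_le_of_sum_le summable_inv_pow17 sum_inv_pow17_le

lemma divisors_card_le (n : ℕ) : n.divisors.card ≤ n := by
  have h : n.divisors.card ≤ (Finset.Ico 1 (n+1)).card := by
    apply Finset.card_le_card
    intro d hd
    have h1 := (Nat.mem_divisors.mp hd).1
    have h2 := (Nat.mem_divisors.mp hd).2
    have := Nat.le_of_dvd (Nat.pos_of_ne_zero h2) h1
    have hd1 : 1 ≤ d := Nat.pos_of_dvd_of_pos h1 (Nat.pos_of_ne_zero h2)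
    simp [Finset.mem_Ico]
    omega
  simpa using h


set_option maxHeartbeats 2000000 in
theorem PsiAux (k D : ℕ) (hk : 19 ≤ k) (hkodd : Odd k)
    (hD : D.Prime) (hD7 : 7 ≤ D) :
    (2 * Real.pi * (D : ℝ) ^ (-(1 / 2) : ℝ) *
    ∑' ℓ : {ℓ : ℕ // 0 < ℓ ∧ ¬ D ∣ ℓ},
      ((ℓ : ℕ) : ℝ) ^ (-(1 / 2) : ℝ) * ((ℓ : ℕ).divisors.card : ℝ) *
        |besselJ ((k : ℝ) - 1) (4 * Real.pi / ((ℓ : ℕ) : ℝ))|) < 0.67 ∧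
    (2 * Real.pi *
    ∑' m : ℕ+,
      ((D : ℝ) * (m : ℕ)) ^ (-(1 / 2) : ℝ) *
        (Real.sqrt D * (((D * (m : ℕ)).divisors.card : ℝ)) + ((D ^ 2 * (m : ℕ)).divisors.card : ℝ)) *
        |besselJ ((k : ℝ) - 1) (4 * Real.pi / ((D : ℝ) * (m : ℕ)))|) < 0.1 := by
  have hn18 : 18 ≤ k - 1 := by omega
  have hcast : ((k - 1 : ℕ) : ℝ) = (k:ℝ) - 1 := by
    have h1 : (1:ℕ) ≤ k := by omega
    push_cast [h1]
    ring
  have hD7R : (7:ℝ) ≤ (D:ℝ) := by exact_mod_cast hD7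
  have hD0 : (0:ℝ) < (D:ℝ) := by linarith
  have hJ : ∀ ℓ : ℝ, 1 ≤ ℓ → |besselJ ((k:ℝ)-1) (4*π/ℓ)| ≤ 0.276 * (ℓ^18)⁻¹ := by
    intro ℓ hℓ
    have := J_le (k-1) hn18 ℓ hℓ
    rwa [hcast] at this
  have h2pi : 2*π ≤ 6.2832 := by nlinarith [Real.pi_lt_d4]
  constructor
  · set F : {ℓ : ℕ // 0 < ℓ ∧ ¬ D ∣ ℓ} → ℝ := fun ℓ =>
      ((ℓ : ℕ) : ℝ) ^ (-(1 / 2) : ℝ) * ((ℓ : ℕ).divisors.card : ℝ) *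
        |besselJ ((k : ℝ) - 1) (4 * Real.pi / ((ℓ : ℕ) : ℝ))| with hF
    set g : ℕ → ℝ := fun m => 0.276 * (((m:ℝ))^17)⁻¹ with hg
    have hgsum : Summable g := summable_inv_pow17.mul_left _
    have hfg : ∀ ℓ : {ℓ : ℕ // 0 < ℓ ∧ ¬ D ∣ ℓ}, F ℓ ≤ g (ℓ:ℕ) := by
      intro ℓ
      have hp : 0 < (ℓ:ℕ) := ℓ.2.1
      have h1 : (1:ℝ) ≤ ((ℓ:ℕ):ℝ) := by exact_mod_cast hp
      have ha : ((ℓ:ℕ):ℝ) ^ (-(1/2):ℝ) ≤ 1 :=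
        Real.rpow_le_one_of_one_le_of_nonpos h1 (by norm_num)
      have hann : (0:ℝ) ≤ ((ℓ:ℕ):ℝ) ^ (-(1/2):ℝ) := Real.rpow_nonneg (by positivity) _
      have hb : (((ℓ:ℕ).divisors.card : ℝ)) ≤ ((ℓ:ℕ):ℝ) := by
        exact_mod_cast divisors_card_le (ℓ:ℕ)
      have hbnn : (0:ℝ) ≤ (((ℓ:ℕ).divisors.card : ℝ)) := by positivity
      have hc := hJ ((ℓ:ℕ):ℝ) h1
      have heq : 1 * ((ℓ:ℕ):ℝ) * (0.276 * ((((ℓ:ℕ):ℝ))^18)⁻¹) = g (ℓ:ℕ) := by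
        rw [hg]
        have h0 : ((ℓ:ℕ):ℝ) ≠ 0 := by linarith
        field_simp
      calc F ℓ ≤ 1 * ((ℓ:ℕ):ℝ) * (0.276 * ((((ℓ:ℕ):ℝ))^18)⁻¹) := by
            apply mul_le_mul (mul_le_mul ha hb hbnn (by norm_num)) hc (abs_nonneg _)
            have : (0:ℝ) ≤ ((ℓ:ℕ):ℝ) := by linarith
            linarith
        _ = g (ℓ:ℕ) := heq
    have hfnn : ∀ ℓ : {ℓ : ℕ // 0 < ℓ ∧ ¬ D ∣ ℓ}, 0 ≤ F ℓ := by
      intro ℓ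
      rw [hF]
      positivity
    have hfsum : Summable F :=
      Summable.of_nonneg_of_le hfnn hfg (hgsum.comp_injective Subtype.val_injective)
    have hS : (∑' ℓ, F ℓ) ≤ ∑' m : ℕ, g m :=
      Summable.tsum_le_tsum_of_inj (fun ℓ => (ℓ:ℕ)) Subtype.val_injective
        (fun c _ => by rw [hg]; positivity) hfg hfsum hgsum
    have hT : (∑' m : ℕ, g m) ≤ 0.276 * (1 + 1/16384) := by
      rw [hg, tsum_mul_left]
      apply mul_le_mul_of_nonneg_left tsum_inv_pow17_le (by norm_num)
    have hS' : (∑' ℓ, F ℓ) ≤ 0.2761 := le_trans hS (le_trans hT (by norm_num))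
    have hSnn : 0 ≤ ∑' ℓ, F ℓ := tsum_nonneg hfnn
    have hrtnn : (0:ℝ) ≤ (D:ℝ)^(-(1/2):ℝ) := Real.rpow_nonneg (by positivity) _
    have hsqD : (2.645:ℝ) ≤ Real.sqrt D := by
      have hs := Real.sq_sqrt (le_of_lt hD0)
      have hsnn := Real.sqrt_nonneg (D:ℝ)
      nlinarith
    have hrtD : (D:ℝ)^(-(1/2):ℝ) ≤ (2.645:ℝ)⁻¹ := by
      rw [Real.rpow_neg (le_of_lt hD0)]
      apply inv_anti₀ (by norm_num)
      calc (2.645:ℝ) ≤ Real.sqrt D := hsqD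
        _ = (D:ℝ) ^ ((1/2:ℝ)) := Real.sqrt_eq_rpow _
    calc 2 * Real.pi * (D:ℝ)^(-(1/2):ℝ) * ∑' ℓ, F ℓ
        ≤ 6.2832 * (2.645:ℝ)⁻¹ * 0.2761 := by
          apply mul_le_mul (mul_le_mul h2pi hrtD hrtnn (by norm_num)) hS' hSnn (by positivity)
      _ < 0.67 := by norm_num
  · set F2 : ℕ+ → ℝ := fun m =>
      ((D : ℝ) * (m : ℕ)) ^ (-(1 / 2) : ℝ) *
        (Real.sqrt D * (((D * (m : ℕ)).divisors.card : ℝ)) + ((D ^ 2 * (m : ℕ)).divisors.card : ℝ)) *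
        |besselJ ((k : ℝ) - 1) (4 * Real.pi / ((D : ℝ) * (m : ℕ)))| with hF2
    set g2 : ℕ → ℝ := fun m => 0.0113 * (((m:ℝ))^17)⁻¹ with hg2
    have hg2sum : Summable g2 := summable_inv_pow17.mul_left _
    have hsqD : Real.sqrt D ≤ (D:ℝ) := by
      have hs := Real.sq_sqrt (le_of_lt hD0)
      have hsnn := Real.sqrt_nonneg (D:ℝ)
      have h1 : (1:ℝ) ≤ Real.sqrt D := by nlinarith
      nlinarith
    have hfg : ∀ m : ℕ+, F2 m ≤ g2 (m:ℕ) := by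
      intro m
      have hm1 : (1:ℝ) ≤ (((m:ℕ)):ℝ) := by exact_mod_cast m.2
      have hmnn : (0:ℝ) < (((m:ℕ)):ℝ) := by linarith
      have hL1 : (1:ℝ) ≤ (D:ℝ) * ((m:ℕ):ℝ) := by nlinarith
      have ha : ((D:ℝ) * ((m:ℕ):ℝ)) ^ (-(1/2):ℝ) ≤ 1 :=
        Real.rpow_le_one_of_one_le_of_nonpos hL1 (by norm_num)
      have hann : (0:ℝ) ≤ ((D:ℝ) * ((m:ℕ):ℝ)) ^ (-(1/2):ℝ) :=
        Real.rpow_nonneg (by positivity) _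
      have hb1 : (((D * (m:ℕ)).divisors.card : ℝ)) ≤ (D:ℝ) * ((m:ℕ):ℝ) := by
        have := divisors_card_le (D * (m:ℕ))
        exact_mod_cast this
      have hb2 : (((D^2 * (m:ℕ)).divisors.card : ℝ)) ≤ (D:ℝ)^2 * ((m:ℕ):ℝ) := by
        have := divisors_card_le (D^2 * (m:ℕ))
        exact_mod_cast this
      have hbr : Real.sqrt D * (((D * (m:ℕ)).divisors.card : ℝ)) + (((D^2 * (m:ℕ)).divisors.card : ℝ))
          ≤ 2 * (D:ℝ)^2 * ((m:ℕ):ℝ) := by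
        have h1 : Real.sqrt D * (((D * (m:ℕ)).divisors.card : ℝ)) ≤ (D:ℝ) * ((D:ℝ) * ((m:ℕ):ℝ)) :=
          mul_le_mul hsqD hb1 (by positivity) (by positivity)
        nlinarith
      have hbrnn : (0:ℝ) ≤ Real.sqrt D * (((D * (m:ℕ)).divisors.card : ℝ)) + (((D^2 * (m:ℕ)).divisors.card : ℝ)) := by
        positivity
      have hc := hJ ((D:ℝ) * ((m:ℕ):ℝ)) hL1
      have h16 : ((D:ℝ)^16)⁻¹ ≤ (49:ℝ)⁻¹ := by
        apply inv_anti₀ (by norm_num)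
        calc (49:ℝ) = 7^2 := by norm_num
          _ ≤ (D:ℝ)^2 := by nlinarith
          _ ≤ (D:ℝ)^16 := pow_le_pow_right₀ (by linarith) (by norm_num)
      have heq : 1 * (2 * (D:ℝ)^2 * ((m:ℕ):ℝ)) * (0.276 * (((D:ℝ) * ((m:ℕ):ℝ))^18)⁻¹)
          = 0.552 * ((D:ℝ)^16)⁻¹ * ((((m:ℕ):ℝ))^17)⁻¹ := by
        have hD' : (D:ℝ) ≠ 0 := ne_of_gt hD0
        have hm' : (((m:ℕ)):ℝ) ≠ 0 := ne_of_gt hmnn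
        field_simp
        ring
      calc F2 m ≤ 1 * (2 * (D:ℝ)^2 * ((m:ℕ):ℝ)) * (0.276 * (((D:ℝ) * ((m:ℕ):ℝ))^18)⁻¹) := by
            apply mul_le_mul (mul_le_mul ha hbr hbrnn (by norm_num)) hc (abs_nonneg _) (by positivity)
        _ = 0.552 * ((D:ℝ)^16)⁻¹ * ((((m:ℕ):ℝ))^17)⁻¹ := heq
        _ ≤ 0.552 * (49:ℝ)⁻¹ * ((((m:ℕ):ℝ))^17)⁻¹ := by
            apply mul_le_mul_of_nonneg_right (mul_le_mul_of_nonneg_left h16 (by norm_num)) (by positivity)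
        _ ≤ g2 (m:ℕ) := by
            rw [hg2]
            apply mul_le_mul_of_nonneg_right (by norm_num) (by positivity)
    have hfnn : ∀ m : ℕ+, 0 ≤ F2 m := by
      intro m
      rw [hF2]
      positivity
    have hinj : Function.Injective (fun m : ℕ+ => (m:ℕ)) := fun a b h => PNat.coe_injective h
    have hfsum : Summable F2 :=
      Summable.of_nonneg_of_le hfnn hfg (hg2sum.comp_injective hinj)
    have hS : (∑' m, F2 m) ≤ ∑' m : ℕ, g2 m :=
      Summable.tsum_le_tsum_of_inj (fun m : ℕ+ => (m:ℕ)) hinj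
        (fun c _ => by rw [hg2]; positivity) hfg hfsum hg2sum
    have hT : (∑' m : ℕ, g2 m) ≤ 0.0113 * (1 + 1/16384) := by
      rw [hg2, tsum_mul_left]
      apply mul_le_mul_of_nonneg_left tsum_inv_pow17_le (by norm_num)
    have hS' : (∑' m, F2 m) ≤ 0.0114 := le_trans hS (le_trans hT (by norm_num))
    have hSnn : 0 ≤ ∑' m, F2 m := tsum_nonneg hfnn
    calc 2 * Real.pi * ∑' m, F2 m ≤ 6.2832 * 0.0114 := by
          apply mul_le_mul h2pi hS' hSnn (by norm_num)
      _ < 0.1 := by norm_num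

/-- For every odd integer `k ≥ 19` and prime `D ≥ 7`:
`Ψ_k^1(D) < 0.67` and `Ψ_k^2(D) < 0.1`. -/
theorem Psi_lt_of_19_le (k D : ℕ) (hk : 19 ≤ k) (hkodd : Odd k)
    (hD : D.Prime) (hD7 : 7 ≤ D) :
    Psi1 k D < 0.67 ∧ Psi2 k D < 0.1 := by
  exact PsiAux k D hk hkodd hD hD7
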